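/- Let q be a prime power and let m, s, t, w, M be positive integers with t < m. Suppose q ≤ ∑_{i=0}^{w} C(s, i) and that there exists an (m,t)_q-cooling code of size M. Then there exists an (ms, t, mw)-low-power cooling (LPC) code of size M. -/

import Mathlib

/-- An `(n,t)`-cooling code of size `M` over coefficients `F`: `M` pairwise disjoint
subsets (codesets) of `F^n` such that for every `t`-subset `S` of coordinates and every
codeset, some vector in the codeset has support disjoint from `S`. -/
def IsCoolingCode (F : Type*) [Zero F] (n t M : ℕ)
    (C : Fin M → Set (Fin n → F)) : Prop :=
  (∀ i j : Fin M, i ≠ j → Disjoint (C i) (C j)) ∧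
  ∀ S : Finset (Fin n), S.card = t → ∀ i : Fin M,
    ∃ x ∈ C i, ∀ j ∈ S, x j = 0

/-- An `(n,t,w)`-low-power cooling code of size `M`: `M` pairwise disjoint subsets of
`F_2^n`, every vector in every codeset has Hamming weight at most `w`, and for every
`t`-subset `S` of coordinates and every codeset, some vector in the codeset has
support disjoint from `S`. -/
def IsLPCCode (n t w M : ℕ) (C : Fin M → Set (Fin n → ZMod 2)) : Prop :=
  (∀ i j : Fin M, i ≠ j → Disjoint (C i) (C j)) ∧
  (∀ i : Fin M, ∀ x ∈ C i, hammingNorm x ≤ w) ∧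
  ∀ S : Finset (Fin n), S.card = t → ∀ i : Fin M,
    ∃ x ∈ C i, ∀ j ∈ S, x j = 0

lemma hammingNorm_def {s : ℕ} (x : Fin s → ZMod 2) :
    hammingNorm x = (Finset.univ.filter fun i => x i ≠ 0).card := rfl

lemma hammingNorm_indicator {s : ℕ} (A : Finset (Fin s)) :
    hammingNorm (fun j => if j ∈ A then (1 : ZMod 2) else 0) = A.card := by
  rw [hammingNorm_def]
  congr 1
  ext j
  by_cases h : j ∈ A <;> simp [h]

lemma zmod2_eq_one_of_ne_zero : ∀ a : ZMod 2, a ≠ 0 → a = 1 := by decide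

/-- Equivalence between small-weight binary vectors and small finsets. -/
noncomputable def smallWeightEquiv (s w : ℕ) :
    {A : Finset (Fin s) // A.card ≤ w} ≃ {v : Fin s → ZMod 2 // hammingNorm v ≤ w} where
  toFun A := ⟨fun j => if j ∈ A.1 then 1 else 0, by
    rw [hammingNorm_indicator]; exact A.2⟩
  invFun v := ⟨Finset.univ.filter fun j => v.1 j ≠ 0, by
    rw [← hammingNorm_def]; exact v.2⟩
  left_inv A := by
    ext j
    by_cases h : j ∈ A.1 <;> simp [h]
  right_inv v := by
    ext j
    by_cases h : v.1 j = 0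
    · simp [h]
    · simp [h, zmod2_eq_one_of_ne_zero _ h]

lemma card_smallWeight (s w : ℕ) :
    Fintype.card {v : Fin s → ZMod 2 // hammingNorm v ≤ w}
      = ∑ i ∈ Finset.range (w + 1), s.choose i := by
  rw [← Fintype.card_congr (smallWeightEquiv s w), Fintype.card_subtype]
  have hU : (Finset.univ.filter fun A : Finset (Fin s) => A.card ≤ w)
      = (Finset.range (w + 1)).biUnion (fun i => Finset.powersetCard i Finset.univ) := by
    ext A
    simp [Finset.mem_powersetCard, Nat.lt_succ_iff]
  rw [hU, Finset.card_biUnion]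
  · refine Finset.sum_congr rfl fun i _ => ?_
    rw [Finset.card_powersetCard, Finset.card_univ, Fintype.card_fin]
  · intro i _ j _ hij
    rw [Function.onFun, Finset.disjoint_left]
    intro A hA hA'
    rw [Finset.mem_powersetCard] at hA hA'
    exact hij (hA.2 ▸ hA'.2)

theorem stmt_17 (q m s t w M : ℕ) (hq : IsPrimePow q)
    (ht : 0 < t) (htm : t < m) (hs : 0 < s) (hw : 0 < w) (hM : 0 < M)
    (hqs : q ≤ ∑ i ∈ Finset.range (w + 1), s.choose i)
    (F : Type) [Field F] [Fintype F] [DecidableEq F] (hF : Fintype.card F = q)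
    (hcool : ∃ C : Fin M → Set (Fin m → F), IsCoolingCode F m t M C) :
    ∃ D : Fin M → Set (Fin (m * s) → ZMod 2), IsLPCCode (m * s) t (m * w) M D := by
  classical
  obtain ⟨C, hCdisj, hCcool⟩ := hcool
  -- an injection from F to small-weight vectors
  have hcard : Fintype.card F ≤ Fintype.card {v : Fin s → ZMod 2 // hammingNorm v ≤ w} := by
    rw [hF, card_smallWeight]; exact hqs
  obtain ⟨ψ⟩ := Function.Embedding.nonempty_of_card_le hcard
  set z : {v : Fin s → ZMod 2 // hammingNorm v ≤ w} := ⟨0, by simp⟩ with hz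
  set φ : F → (Fin s → ZMod 2) := fun a => ((Equiv.swap (ψ 0) z) (ψ a)).1 with hφ
  have hφ0 : φ 0 = 0 := by simp [hφ, hz]
  have hφw : ∀ a, hammingNorm (φ a) ≤ w := fun a => ((Equiv.swap (ψ 0) z) (ψ a)).2
  have hφinj : Function.Injective φ := by
    intro a b hab
    exact ψ.injective ((Equiv.swap (ψ 0) z).injective (Subtype.ext hab))
  -- the concatenation map
  set e := finProdFinEquiv (m := m) (n := s)
  set Φ : (Fin m → F) → (Fin (m * s) → ZMod 2) :=
    fun x k => φ (x (e.symm k).1) (e.symm k).2 with hΦ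
  have hΦinj : Function.Injective Φ := by
    intro x y hxy
    funext j
    apply hφinj
    funext b
    have := congrFun hxy (e (j, b))
    simpa [hΦ] using this
  refine ⟨fun i => Φ '' C i, ?_, ?_, ?_⟩
  · intro i j hij
    rw [Set.disjoint_left]
    rintro _ ⟨x, hx, rfl⟩ ⟨y, hy, hxy⟩
    have : x = y := hΦinj hxy.symm
    exact Set.disjoint_left.mp (hCdisj i j hij) hx (this ▸ hy)
  · rintro i _ ⟨x, _, rfl⟩
    rw [hammingNorm_def]
    have hsub : (Finset.univ.filter fun k => Φ x k ≠ 0)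
        ⊆ Finset.univ.biUnion (fun j : Fin m =>
          (Finset.univ.filter fun b => φ (x j) b ≠ 0).image (fun b => e (j, b))) := by
      intro k hk
      rw [Finset.mem_filter] at hk
      rw [Finset.mem_biUnion]
      refine ⟨(e.symm k).1, Finset.mem_univ _, ?_⟩
      rw [Finset.mem_image]
      exact ⟨(e.symm k).2, Finset.mem_filter.mpr ⟨Finset.mem_univ _, hk.2⟩, by simp⟩
    calc (Finset.univ.filter fun k => Φ x k ≠ 0).card
        ≤ _ := Finset.card_le_card hsub
      _ ≤ ∑ j : Fin m, ((Finset.univ.filter fun b => φ (x j) b ≠ 0).image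
            (fun b => e (j, b))).card := Finset.card_biUnion_le
      _ ≤ ∑ j : Fin m, w := by
          refine Finset.sum_le_sum fun j _ => ?_
          exact le_trans (Finset.card_image_le) (by rw [← hammingNorm_def]; exact hφw _)
      _ = m * w := by simp [Finset.sum_const, Finset.card_univ]
  · intro S hS i
    set S' : Finset (Fin m) := S.image (fun k => (e.symm k).1) with hS'
    have hS'card : S'.card ≤ t := hS ▸ Finset.card_image_le
    obtain ⟨T, hTsub, -, hTcard⟩ := Finset.exists_subsuperset_card_eq
      (Finset.subset_univ S') hS'card (by simp [Finset.card_univ]; omega)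
    obtain ⟨x, hx, hx0⟩ := hCcool T hTcard i
    refine ⟨Φ x, ⟨x, hx, rfl⟩, fun k hk => ?_⟩
    have hj : (e.symm k).1 ∈ T := hTsub (Finset.mem_image_of_mem _ hk)
    have : x (e.symm k).1 = 0 := hx0 _ hj
    simp [hΦ, this, hφ0]
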